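/- Let p be a prime, and let a+1 = ∑ α_i p^i and b = ∑ β_i p^i be p-adic expansions. If I = { i ≥ 0 : ∑_{j=0}^{i} (α_j + β_j) p^j ≥ p^{i+1} } is nonempty with minimum i₀ and maximum i₁, then there exists c in the interval [a+1, a+b+1] with v_p(c) ≥ i₁ + 1; consequently v_p((a+b+1)!/(a!·b!)) ≤ v_p(lcm(a+1, ..., a+b+1)). -/

import Mathlib

/-- The carry condition at position `i` when adding `a+1` and `b` in base `p`:
`∑_{j=0}^{i} (α_j + β_j) p^j ≥ p^{i+1}`, where `α_j, β_j` are the base-`p` digits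
of `a+1` and `b` respectively. -/
def CarryAt (p a b i : ℕ) : Prop :=
  p ^ (i + 1) ≤
    ∑ j ∈ Finset.range (i + 1), ((a + 1) / p ^ j % p + b / p ^ j % p) * p ^ j

private lemma digit_sum_eq_mod (p x n : ℕ) :
    ∑ j ∈ Finset.range n, (x / p ^ j % p) * p ^ j = x % p ^ n := by
  induction n with
  | zero => exact (Nat.mod_one x).symm
  | succ n ih =>
      rw [Finset.sum_range_succ, ih, pow_succ, Nat.mod_mul, mul_comm]

private lemma carryAt_iff (p a b i : ℕ) :
    CarryAt p a b i ↔ p ^ (i + 1) ≤ (a + 1) % p ^ (i + 1) + b % p ^ (i + 1) := by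
  unfold CarryAt
  have : ∑ j ∈ Finset.range (i + 1), ((a + 1) / p ^ j % p + b / p ^ j % p) * p ^ j
      = (a + 1) % p ^ (i + 1) + b % p ^ (i + 1) := by
    rw [← digit_sum_eq_mod p (a + 1) (i + 1), ← digit_sum_eq_mod p b (i + 1),
      ← Finset.sum_add_distrib]
    exact Finset.sum_congr rfl fun j _ => by ring
  rw [this]

theorem exists_high_valuation_in_interval (p : ℕ) (hp : p.Prime) (a b : ℕ)
    (i₀ i₁ : ℕ) (hi₀ : CarryAt p a b i₀) (hi₀min : ∀ i, CarryAt p a b i → i₀ ≤ i)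
    (hi₁ : CarryAt p a b i₁) (hi₁max : ∀ i, CarryAt p a b i → i ≤ i₁) :
    (∃ c ∈ Finset.Icc (a + 1) (a + b + 1), i₁ + 1 ≤ padicValNat p c) ∧
      padicValNat p ((a + b + 1).factorial / (a.factorial * b.factorial)) ≤
        padicValNat p ((Finset.Icc (a + 1) (a + b + 1)).lcm id) := by
  haveI : Fact p.Prime := ⟨hp⟩
  have hii : i₀ ≤ i₁ := hi₀min i₁ hi₁
  set P := p ^ (i₁ + 1) with hPdef
  have hPpos : 0 < P := Nat.pow_pos hp.pos
  have hc1 : P ≤ (a + 1) % P + b % P := (carryAt_iff p a b i₁).mp hi₁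
  set c := P * ((a + 1) / P) + P with hcdef
  have hmodlt : (a + 1) % P < P := Nat.mod_lt _ hPpos
  have hq := Nat.div_add_mod (a + 1) P
  have hdvd : P ∣ c := ⟨(a + 1) / P + 1, by rw [hcdef]; ring⟩
  have hc0 : c ≠ 0 := by omega
  have hcmem : c ∈ Finset.Icc (a + 1) (a + b + 1) := by
    have hb : b % P ≤ b := Nat.mod_le _ _
    simp only [Finset.mem_Icc]
    omega
  have hval : i₁ + 1 ≤ padicValNat p c :=
    (padicValNat_dvd_iff_le hc0).mp hdvd
  refine ⟨⟨c, hcmem, hval⟩, ?_⟩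
  -- lcm side
  have hlcm0 : (Finset.Icc (a + 1) (a + b + 1)).lcm id ≠ 0 := by
    intro h
    rw [Finset.lcm_eq_zero_iff] at h
    simp only [Set.mem_image, Finset.mem_coe, Finset.mem_Icc, id_eq] at h
    obtain ⟨x, hx, hx0⟩ := h
    omega
  have hcdvdlcm : c ∣ (Finset.Icc (a + 1) (a + b + 1)).lcm id :=
    Finset.dvd_lcm hcmem
  have hlcmval : i₁ + 1 ≤ padicValNat p ((Finset.Icc (a + 1) (a + b + 1)).lcm id) :=
    (padicValNat_dvd_iff_le hlcm0).mp (dvd_trans hdvd hcdvdlcm)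
  -- rewrite the quotient
  have hkey : (a + b + 1).factorial / (a.factorial * b.factorial)
      = (a + 1) * Nat.choose (a + b + 1) (a + 1) := by
    have h := Nat.choose_mul_factorial_mul_factorial
      (show a + 1 ≤ a + b + 1 by omega)
    have hsub : a + b + 1 - (a + 1) = b := by omega
    rw [hsub] at h
    have hfact : (a + 1).factorial = (a + 1) * a.factorial := Nat.factorial_succ a
    have : (a + b + 1).factorial
        = (a + 1) * Nat.choose (a + b + 1) (a + 1) * (a.factorial * b.factorial) := by
      rw [← h, hfact]; ring
    rw [this, Nat.mul_div_cancel _ (Nat.mul_pos a.factorial_pos b.factorial_pos)]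
  rw [hkey]
  have hC0 : Nat.choose (a + b + 1) (a + 1) ≠ 0 :=
    (Nat.choose_pos (by omega)).ne'
  rw [padicValNat.mul (by omega) hC0]
  -- Kummer's theorem
  set B := Nat.log p (a + b + 1) + 1 with hBdef
  have hcomm : a + b + 1 = b + (a + 1) := by omega
  have hK : padicValNat p ((a + b + 1).choose (a + 1)) =
      ((Finset.Ico 1 B).filter fun i => p ^ i ≤ (a + 1) % p ^ i + b % p ^ i).card := by
    rw [hcomm]
    exact padicValNat_choose' (by rw [← hcomm]; exact Nat.lt_succ_self _)
  -- the set of carries lies in [i₀+1, i₁+1]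
  have hsubset : ((Finset.Ico 1 B).filter fun i => p ^ i ≤ (a + 1) % p ^ i + b % p ^ i)
      ⊆ Finset.Icc (i₀ + 1) (i₁ + 1) := by
    intro i hi
    simp only [Finset.mem_filter, Finset.mem_Ico] at hi
    obtain ⟨⟨h1, _⟩, h2⟩ := hi
    obtain ⟨j, rfl⟩ : ∃ j, i = j + 1 := ⟨i - 1, by omega⟩
    have hcj : CarryAt p a b j := (carryAt_iff p a b j).mpr h2
    have := hi₀min j hcj
    have := hi₁max j hcj
    simp only [Finset.mem_Icc]
    omega
  have hcard : ((Finset.Ico 1 B).filter fun i => p ^ i ≤ (a + 1) % p ^ i + b % p ^ i).card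
      ≤ i₁ - i₀ + 1 := by
    calc _ ≤ (Finset.Icc (i₀ + 1) (i₁ + 1)).card := Finset.card_le_card hsubset
    _ = i₁ - i₀ + 1 := by rw [Nat.card_Icc]; omega
  -- the valuation of a+1 is at most i₀
  have hva : padicValNat p (a + 1) ≤ i₀ := by
    by_contra h
    push_neg at h
    have hdvd0 : p ^ (i₀ + 1) ∣ (a + 1) :=
      dvd_trans (pow_dvd_pow p h) (pow_padicValNat_dvd)
    have hmod0 : (a + 1) % p ^ (i₀ + 1) = 0 := Nat.eq_zero_of_dvd_of_lt (Nat.dvd_mod_iff dvd_rfl |>.mpr hdvd0) (Nat.mod_lt _ (Nat.pow_pos hp.pos))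
    have hclow := (carryAt_iff p a b i₀).mp hi₀
    have hblt : b % p ^ (i₀ + 1) < p ^ (i₀ + 1) := Nat.mod_lt _ (Nat.pow_pos hp.pos)
    omega
  calc padicValNat p (a + 1) + padicValNat p ((a + b + 1).choose (a + 1))
      ≤ i₀ + (i₁ - i₀ + 1) := by rw [hK]; omega
    _ ≤ i₁ + 1 := by omega
    _ ≤ _ := hlcmval
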